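/- Let D be a big prime divisor on a normal projective variety X, with Okounkov body Δ(D) ⊂ ℝⁿ with respect to a fixed flag, and set p = ν(D) ∈ Δ(D) (the image of the canonical section of D under the flag valuation). Then for every t ∈ [0,1], the Okounkov body of the filtered algebra satisfies Δ^t(D) = t·p + (1−t)·Δ(D); consequently a_max(‖D‖, ord_D) = 1 and the concave transform G_{D, ord_D} equals the extremal function E_{Δ(D), p}. In particular, G_{D, ord_D} is continuous at p if and only if Δ(D) is conical at p. -/

import Mathlib

open Pointwise
open Filter Topology

set_option maxHeartbeats 2000000

/-- Okounkov-body description of the filtration by `ord_D` for a big prime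
divisor `D`. Here `A k ⊂ ℝⁿ` is the set of flag-valuation vectors `ν(s)` of nonzero
sections `s ∈ H⁰(kD)` (a superadditive family, containing `0` at level `0` and the
point `pt = ν(D)` at level `1`), and `F k m` the vectors coming from sections with
`ord_D(s) ≥ m`; the identification `F^m H⁰(kD) ≅ H⁰((k-m)D)` (twist by the canonical
section of `mD`) is `hF`. With `Δ = Δ(D)` the Okounkov body and
`Δt t = Δ^t(D)` the bodies of the filtered subalgebras, we have
`Δ^t(D) = t·pt + (1-t)·Δ(D)` for `t ∈ [0,1]`; `a_max(kD, ord_D)/k = 1` for all `k`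
(so `a_max(‖D‖, ord_D) = 1`); the concave transform `G = G_{D, ord_D}` equals the
extremal function `E = E_{Δ(D), pt}`; and `G` is continuous at `pt` iff `Δ(D)` is
conical at `pt`. -/
theorem stmt_19 (n : ℕ) (A : ℕ → Set (Fin n → ℝ)) (pt : Fin n → ℝ)
    (hadd : ∀ k l : ℕ, A k + A l ⊆ A (k + l))
    (h0 : (0 : Fin n → ℝ) ∈ A 0) (hpt : pt ∈ A 1)
    (hne : ∀ k : ℕ, 1 ≤ k → (A k).Nonempty)
    (F : ℕ → ℕ → Set (Fin n → ℝ))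
    (hF : ∀ k m : ℕ, m ≤ k → F k m = (fun x => (m : ℝ) • pt + x) '' A (k - m))
    (hF' : ∀ k m : ℕ, k < m → F k m = ∅)
    (Δ : Set (Fin n → ℝ))
    (hΔ : Δ = closure (⋃ k ∈ {k : ℕ | 1 ≤ k}, ((k : ℝ)⁻¹) • A k))
    (hconv : Convex ℝ Δ) (hcompact : IsCompact Δ) (hint : (interior Δ).Nonempty)
    (Δt : ℝ → Set (Fin n → ℝ))
    (hΔt : ∀ t : ℝ, Δt t = closure (⋃ k ∈ {k : ℕ | 1 ≤ k},
      ((k : ℝ)⁻¹) • F k ⌈(k : ℝ) * t⌉₊))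
    (G E : (Fin n → ℝ) → ℝ)
    (hG : ∀ x, G x = sSup {t : ℝ | 0 ≤ t ∧ x ∈ Δt t})
    (hE : ∀ x, E x = sSup {t : ℝ | t ∈ Set.Icc (0 : ℝ) 1 ∧
      ∃ y ∈ Δ, x = t • pt + (1 - t) • y}) :
    (∀ t ∈ Set.Icc (0 : ℝ) 1, Δt t = (fun y => t • pt + (1 - t) • y) '' Δ) ∧
    (∀ k : ℕ, 1 ≤ k →
      sSup {r : ℝ | ∃ m : ℕ, (F k m).Nonempty ∧ r = (m : ℝ) / k} = 1) ∧
    (∀ x ∈ Δ, G x = E x) ∧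
    (ContinuousWithinAt G Δ pt ↔ ∃ C : Set (Fin n → ℝ), IsClosed C ∧ Convex ℝ C ∧
      (∀ x ∈ C, ∀ r : ℝ, 0 ≤ r → pt + r • (x - pt) ∈ C) ∧
      ∃ U ∈ nhds pt, Δ ∩ U = C ∩ U) := by
  classical
  have hΔclosed : IsClosed Δ := hcompact.isClosed
  have hsubΔ : ∀ k : ℕ, 1 ≤ k → ∀ a ∈ A k, (k:ℝ)⁻¹ • a ∈ Δ := by
    intro k hk a ha
    rw [hΔ]
    exact subset_closure (Set.mem_biUnion hk (Set.smul_mem_smul_set ha))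
  have hptΔ : pt ∈ Δ := by simpa using hsubΔ 1 le_rfl pt hpt
  have hA0 : ∀ a ∈ A 0, a = 0 := by
    intro a ha
    by_contra hne0
    obtain ⟨x, hx⟩ := hne 1 le_rfl
    have hxm : ∀ m : ℕ, x + (m:ℝ) • a ∈ A 1 := by
      intro m
      induction m with
      | zero => simpa using hx
      | succ m ih =>
        have h2 := hadd 1 0 (Set.add_mem_add ih ha)
        have heq : x + ((m+1:ℕ):ℝ) • a = (x + (m:ℝ) • a) + a := by
          push_cast; module
        rw [heq]; exact h2
    obtain ⟨R, hR⟩ := isBounded_iff_forall_norm_le.mp hcompact.isBounded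
    have hnorm : ∀ m : ℕ, (m:ℝ) * ‖a‖ ≤ R + ‖x‖ := by
      intro m
      have hmem : x + (m:ℝ) • a ∈ Δ := by
        simpa using hsubΔ 1 le_rfl _ (hxm m)
      have h1 : ‖x + (m:ℝ) • a‖ ≤ R := hR _ hmem
      have h2 : ‖(m:ℝ) • a‖ - ‖x‖ ≤ ‖x + (m:ℝ) • a‖ := by
        have := norm_add_le x ((-1 : ℝ) • (x + (m:ℝ) • a))
        have h3 : ‖(m:ℝ) • a‖ ≤ ‖x‖ + ‖x + (m:ℝ) • a‖ := by
          calc ‖(m:ℝ) • a‖ = ‖(x + (m:ℝ) • a) - x‖ := by congr 1; abel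
          _ ≤ ‖x + (m:ℝ) • a‖ + ‖x‖ := norm_sub_le _ _
          _ = ‖x‖ + ‖x + (m:ℝ) • a‖ := by ring
        linarith
      have h4 : ‖(m:ℝ) • a‖ = (m:ℝ) * ‖a‖ := by
        rw [norm_smul, Real.norm_natCast]
      linarith
    have hapos : 0 < ‖a‖ := norm_pos_iff.mpr hne0
    obtain ⟨m, hm⟩ := exists_nat_gt ((R + ‖x‖)/‖a‖)
    have := hnorm m
    rw [div_lt_iff₀ hapos] at hm
    linarith
  have hnsmul : ∀ (l : ℕ) (a : Fin n → ℝ), a ∈ A l → ∀ q : ℕ, (q:ℝ) • a ∈ A (q * l) := by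
    intro l a ha q
    induction q with
    | zero => simpa using h0
    | succ q ih =>
      have h2 := hadd (q*l) l (Set.add_mem_add ih ha)
      have heq : ((q+1:ℕ):ℝ) • a = (q:ℝ) • a + a := by push_cast; module
      have heq2 : (q+1)*l = q*l + l := by ring
      rw [heq, heq2]; exact h2
  have hptA : ∀ j : ℕ, (j:ℝ) • pt ∈ A j := by
    intro j
    simpa using hnsmul 1 pt hpt j
  -- Conjunct 1
  have key1 : ∀ t ∈ Set.Icc (0:ℝ) 1, Δt t = (fun y => t • pt + (1 - t) • y) '' Δ := by
    rintro t ⟨ht0, ht1⟩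
    have hcont : Continuous fun y : Fin n → ℝ => t • pt + (1-t) • y :=
      continuous_const.add (continuous_id.const_smul (1-t))
    have hTclosed : IsClosed ((fun y => t • pt + (1-t) • y) '' Δ) := (hcompact.image hcont).isClosed
    have lemA : ∀ s : ℝ, t ≤ s → s ≤ 1 → ∀ yy ∈ Δ,
        s • pt + (1-s) • yy ∈ (fun y => t • pt + (1-t) • y) '' Δ := by
      intro s hts hs1 yy hyy
      rcases eq_or_lt_of_le ht1 with h1 | h1
      · have hs : s = 1 := le_antisymm hs1 (h1 ▸ hts)
        exact ⟨yy, hyy, by rw [hs, ← h1]⟩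
      · have h1t : (0:ℝ) < 1 - t := by linarith
        have h1tne : (1:ℝ) - t ≠ 0 := ne_of_gt h1t
        have hw : ((s-t)/(1-t)) • pt + ((1-s)/(1-t)) • yy ∈ Δ := by
          apply hconv hptΔ hyy (div_nonneg (by linarith) (by linarith))
            (div_nonneg (by linarith) (by linarith))
          field_simp
          ring
        refine ⟨_, hw, ?_⟩
        show t • pt + (1-t) • (((s-t)/(1-t)) • pt + ((1-s)/(1-t)) • yy) = s • pt + (1-s) • yy
        match_scalars <;> field_simp <;> ring
    rw [hΔt]
    apply Set.Subset.antisymm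
    · apply closure_minimal _ hTclosed
      intro x hx
      simp only [Set.mem_iUnion, Set.mem_setOf_eq] at hx
      obtain ⟨k, hk, hx⟩ := hx
      obtain ⟨z, hz, rfl⟩ := hx
      have hkpos : (0:ℝ) < k := by exact_mod_cast hk
      have hkt : (k:ℝ) * t ≤ k := by nlinarith
      have hmk : ⌈(k:ℝ)*t⌉₊ ≤ k := Nat.ceil_le.mpr (by exact_mod_cast hkt)
      rw [hF k _ hmk] at hz
      obtain ⟨a, ha, rfl⟩ := hz
      beta_reduce
      set m := ⌈(k:ℝ)*t⌉₊ with hm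
      rcases eq_or_lt_of_le hmk with hmk' | hmk'
      · have ha0 : a = 0 := hA0 a (by rw [hmk'] at ha; simpa using ha)
        have hpteq : (k:ℝ)⁻¹ • ((m:ℝ) • pt + a) = (1:ℝ) • pt + ((1:ℝ)-1) • pt := by
          rw [ha0, hmk']
          match_scalars <;> field_simp <;> ring
        rw [hpteq]
        exact lemA 1 ht1 le_rfl pt hptΔ
      · have hkm1 : 1 ≤ k - m := by omega
        have hy0 : ((k-m:ℕ):ℝ)⁻¹ • a ∈ Δ := hsubΔ _ hkm1 a ha
        have hcast : ((k-m:ℕ):ℝ) = (k:ℝ) - m := by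
          push_cast [Nat.cast_sub hmk]; ring
        have hkm0 : (k:ℝ) - m ≠ 0 := by
          have : (m:ℝ) < k := by exact_mod_cast hmk'
          linarith
        have hts : t ≤ (m:ℝ)/k := by
          rw [le_div_iff₀ hkpos]
          calc t * k = (k:ℝ) * t := by ring
          _ ≤ ⌈(k:ℝ)*t⌉₊ := Nat.le_ceil _
        have hs1 : (m:ℝ)/k ≤ 1 := by
          rw [div_le_one hkpos]; exact_mod_cast hmk
        have hmem := lemA ((m:ℝ)/k) hts hs1 _ hy0
        have heq : (k:ℝ)⁻¹ • ((m:ℝ) • pt + a)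
            = ((m:ℝ)/k) • pt + (1 - (m:ℝ)/k) • (((k-m:ℕ):ℝ)⁻¹ • a) := by
          rw [hcast]
          match_scalars <;> field_simp <;> ring
        rw [heq]; exact hmem
    · rintro x ⟨y, hy, rfl⟩
      have hDtclosed : IsClosed (closure (⋃ k ∈ {k : ℕ | 1 ≤ k}, ((k : ℝ)⁻¹) • F k ⌈(k : ℝ) * t⌉₊)) :=
        isClosed_closure
      have hyc : y ∈ closure (⋃ k ∈ {k : ℕ | 1 ≤ k}, ((k : ℝ)⁻¹) • A k) := hΔ ▸ hy
      suffices hmapsto : Set.MapsTo (fun y => t • pt + (1-t) • y)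
          (⋃ k ∈ {k : ℕ | 1 ≤ k}, ((k : ℝ)⁻¹) • A k)
          (closure (⋃ k ∈ {k : ℕ | 1 ≤ k}, ((k : ℝ)⁻¹) • F k ⌈(k : ℝ) * t⌉₊)) by
        have := map_mem_closure hcont hyc hmapsto
        rwa [hDtclosed.closure_eq] at this
      intro y₀ hy₀
      simp only [Set.mem_iUnion, Set.mem_setOf_eq] at hy₀
      obtain ⟨l, hl, hy₀⟩ := hy₀
      obtain ⟨a, ha, rfl⟩ := hy₀
      beta_reduce
      have hl0 : (0:ℝ) < l := by exact_mod_cast hl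
      have hlne : (l:ℝ) ≠ 0 := ne_of_gt hl0
      -- the sequence
      set mf : ℕ → ℕ := fun k => ⌈(k:ℝ)*t⌉₊ with hmf
      set qf : ℕ → ℕ := fun k => (k - mf k)/l with hqf
      set jf : ℕ → ℕ := fun k => (k - mf k)%l with hjf
      have hmfk : ∀ k : ℕ, 1 ≤ k → mf k ≤ k := by
        intro k hk
        have hkpos : (0:ℝ) < k := by exact_mod_cast hk
        exact Nat.ceil_le.mpr (by nlinarith)
      have hdecomp : ∀ k : ℕ, qf k * l + jf k = k - mf k := fun k => Nat.div_add_mod' _ _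
      set e : ℕ → (Fin n → ℝ) := fun k =>
        (k:ℝ)⁻¹ • ((mf k:ℝ) • pt + ((qf k:ℝ) • a + (jf k:ℝ) • pt)) with he
      have hmem : ∀ k : ℕ, 1 ≤ k →
          e k ∈ ⋃ k ∈ {k : ℕ | 1 ≤ k}, ((k : ℝ)⁻¹) • F k ⌈(k : ℝ) * t⌉₊ := by
        intro k hk
        have hin : (qf k:ℝ) • a + (jf k:ℝ) • pt ∈ A (k - mf k) := by
          rw [← hdecomp k]
          exact hadd _ _ (Set.add_mem_add (hnsmul l a ha (qf k)) (hptA (jf k)))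
        have hFmem : (mf k:ℝ) • pt + ((qf k:ℝ) • a + (jf k:ℝ) • pt) ∈ F k (mf k) := by
          rw [hF k (mf k) (hmfk k hk)]
          exact ⟨_, hin, rfl⟩
        exact Set.mem_biUnion hk (Set.smul_mem_smul_set hFmem)
      -- limits
      have hc1 : Tendsto (fun k : ℕ => ((mf k:ℝ) + (jf k:ℝ))/k) atTop (𝓝 t) := by
        have hm1 : Tendsto (fun k : ℕ => (mf k:ℝ)/k) atTop (𝓝 t) := by
          have hup : Tendsto (fun k : ℕ => t + 1/(k:ℝ)) atTop (𝓝 t) := by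
            have := (tendsto_const_nhds (α := ℕ) (x := t) (f := atTop)).add
              tendsto_one_div_atTop_nhds_zero_nat
            simpa using this
          apply tendsto_of_tendsto_of_tendsto_of_le_of_le' tendsto_const_nhds hup
          · filter_upwards [eventually_ge_atTop 1] with k hk
            have hkpos : (0:ℝ) < k := by exact_mod_cast hk
            rw [le_div_iff₀ hkpos]
            calc t * k = (k:ℝ) * t := by ring
            _ ≤ (mf k : ℝ) := Nat.le_ceil _
          · filter_upwards [eventually_ge_atTop 1] with k hk
            have hkpos : (0:ℝ) < k := by exact_mod_cast hk
            have hceil : (mf k : ℝ) < (k:ℝ)*t + 1 := Nat.ceil_lt_add_one (by positivity)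
            rw [div_le_iff₀ hkpos]
            calc (mf k : ℝ) ≤ (k:ℝ)*t + 1 := le_of_lt hceil
            _ = (t + 1/k) * k := by field_simp
        have hj1 : Tendsto (fun k : ℕ => (jf k:ℝ)/k) atTop (𝓝 0) := by
          have hup2 : Tendsto (fun k : ℕ => (l:ℝ)/k) atTop (𝓝 0) := by
            have : Tendsto (fun k : ℕ => (l:ℝ) * (1/k)) atTop (𝓝 ((l:ℝ) * 0)) :=
              tendsto_const_nhds.mul tendsto_one_div_atTop_nhds_zero_nat
            simpa [div_eq_mul_inv] using this
          apply tendsto_of_tendsto_of_tendsto_of_le_of_le' tendsto_const_nhds hup2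
          · filter_upwards [eventually_ge_atTop 1] with k hk
            have hkpos : (0:ℝ) < k := by exact_mod_cast hk
            positivity
          · filter_upwards [eventually_ge_atTop 1] with k hk
            have hkpos : (0:ℝ) < k := by exact_mod_cast hk
            gcongr
            exact_mod_cast le_of_lt (Nat.mod_lt _ hl)
        have := hm1.add hj1
        simpa [add_div] using this
      have hqcast : ∀ k : ℕ, 1 ≤ k → (qf k:ℝ) * l = (k:ℝ) - mf k - jf k := by
        intro k hk
        have h1 := hdecomp k
        have h2 : (qf k * l : ℕ) + (jf k:ℕ) = k - mf k := h1
        have h3 : ((qf k * l + jf k : ℕ) : ℝ) = ((k - mf k : ℕ) : ℝ) := by rw [h2]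
        push_cast [Nat.cast_sub (hmfk k hk)] at h3
        linarith
      have hc2 : Tendsto (fun k : ℕ => (qf k:ℝ)/k) atTop (𝓝 ((1-t)/l)) := by
        have hlim : Tendsto (fun k : ℕ => (1 - ((mf k:ℝ) + (jf k:ℝ))/k)/l) atTop (𝓝 ((1-t)/l)) :=
          (tendsto_const_nhds.sub hc1).div_const l
        apply Tendsto.congr' _ hlim
        filter_upwards [eventually_ge_atTop 1] with k hk
        have hkpos : (0:ℝ) < k := by exact_mod_cast hk
        have := hqcast k hk
        field_simp
        linear_combination (-1:ℝ) * this
      have heqev : ∀ᶠ k in atTop, (((mf k:ℝ) + (jf k:ℝ))/k) • pt + ((qf k:ℝ)/k) • a = e k := by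
        filter_upwards [eventually_ge_atTop 1] with k hk
        have hkpos : (0:ℝ) < k := by exact_mod_cast hk
        have hkne : (k:ℝ) ≠ 0 := ne_of_gt hkpos
        rw [he]
        match_scalars <;> field_simp <;> ring
      have hlim : Tendsto e atTop (𝓝 (t • pt + ((1-t)/(l:ℝ)) • a)) := by
        apply Tendsto.congr' heqev
        exact (hc1.smul_const pt).add (hc2.smul_const a)
      have hfin : t • pt + (1-t) • ((l:ℝ)⁻¹ • a) = t • pt + ((1-t)/(l:ℝ)) • a := by
        match_scalars <;> field_simp
      rw [hfin]
      exact mem_closure_of_tendsto hlim (eventually_atTop.mpr ⟨1, hmem⟩)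
  -- Conjunct 2
  have key2 : ∀ k : ℕ, 1 ≤ k →
      sSup {r : ℝ | ∃ m : ℕ, (F k m).Nonempty ∧ r = (m : ℝ) / k} = 1 := by
    intro k hk
    have hkpos : (0:ℝ) < k := by exact_mod_cast hk
    have hkne : (k:ℝ) ≠ 0 := ne_of_gt hkpos
    have hmem : (1:ℝ) ∈ {r : ℝ | ∃ m : ℕ, (F k m).Nonempty ∧ r = (m : ℝ) / k} := by
      refine ⟨k, ⟨(k:ℝ) • pt + 0, ?_⟩, by field_simp⟩
      rw [hF k k le_rfl]
      exact ⟨0, by simpa using h0, rfl⟩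
    have hub : ∀ r ∈ {r : ℝ | ∃ m : ℕ, (F k m).Nonempty ∧ r = (m : ℝ) / k}, r ≤ 1 := by
      rintro r ⟨m, hFne, rfl⟩
      have hmk : m ≤ k := by
        by_contra h
        rw [hF' k m (by omega)] at hFne
        exact Set.not_nonempty_empty hFne
      rw [div_le_one hkpos]
      exact_mod_cast hmk
    exact le_antisymm (csSup_le ⟨1, hmem⟩ hub) (le_csSup ⟨1, hub⟩ hmem)
  -- Δt t is empty for t > 1
  have hΔtempty : ∀ t : ℝ, 1 < t → Δt t = ∅ := by
    intro t htt
    rw [hΔt]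
    have hFe : ∀ k : ℕ, 1 ≤ k → F k ⌈(k:ℝ)*t⌉₊ = ∅ := by
      intro k hk
      apply hF'
      have hkpos : (0:ℝ) < k := by exact_mod_cast hk
      exact Nat.lt_ceil.mpr (by nlinarith)
    have : (⋃ k ∈ {k : ℕ | 1 ≤ k}, ((k : ℝ)⁻¹) • F k ⌈(k : ℝ) * t⌉₊) = ∅ := by
      apply Set.eq_empty_iff_forall_notMem.mpr
      intro x hx
      simp only [Set.mem_iUnion, Set.mem_setOf_eq] at hx
      obtain ⟨k, hk, hx⟩ := hx
      rw [hFe k hk, Set.smul_set_empty] at hx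
      exact hx
    rw [this, closure_empty]
  -- Conjunct 3: G = E
  have hGE : ∀ x, G x = E x := by
    intro x
    rw [hG, hE]
    congr 1
    ext s
    simp only [Set.mem_setOf_eq]
    constructor
    · rintro ⟨hs0, hsm⟩
      have hs1 : s ≤ 1 := by
        by_contra h
        rw [hΔtempty s (by linarith)] at hsm
        exact hsm
      rw [key1 s ⟨hs0, hs1⟩] at hsm
      obtain ⟨y, hy, hxy⟩ := hsm
      exact ⟨⟨hs0, hs1⟩, y, hy, hxy.symm⟩
    · rintro ⟨⟨hs0, hs1⟩, y, hy, hxy⟩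
      exact ⟨hs0, by rw [key1 s ⟨hs0, hs1⟩]; exact ⟨y, hy, hxy.symm⟩⟩
  have hGEfun : G = E := funext hGE
  -- E facts
  have hub1 : ∀ x : Fin n → ℝ, ∀ s ∈ {t : ℝ | t ∈ Set.Icc (0:ℝ) 1 ∧
      ∃ y ∈ Δ, x = t • pt + (1 - t) • y}, s ≤ 1 := fun x s hs => hs.1.2
  have h0mem : ∀ x ∈ Δ, (0:ℝ) ∈ {t : ℝ | t ∈ Set.Icc (0:ℝ) 1 ∧
      ∃ y ∈ Δ, x = t • pt + (1 - t) • y} := by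
    intro x hx
    exact ⟨⟨le_rfl, zero_le_one⟩, x, hx, by simp⟩
  have hE_le : ∀ x ∈ Δ, E x ≤ 1 := by
    intro x hx
    rw [hE]
    exact csSup_le ⟨0, h0mem x hx⟩ (hub1 x)
  have hE_ge : ∀ x : Fin n → ℝ, ∀ s ∈ {t : ℝ | t ∈ Set.Icc (0:ℝ) 1 ∧
      ∃ y ∈ Δ, x = t • pt + (1 - t) • y}, s ≤ E x := by
    intro x s hs
    rw [hE]
    exact le_csSup ⟨1, hub1 x⟩ hs
  have hEpt : E pt = 1 := by
    apply le_antisymm (hE_le pt hptΔ)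
    exact hE_ge pt 1 ⟨⟨zero_le_one, le_rfl⟩, pt, hptΔ, by simp⟩
  refine ⟨key1, key2, fun x _ => hGE x, ?_⟩
  rw [hGEfun]
  constructor
  · -- continuity implies conical
    intro hcont
    have ht : Tendsto E (𝓝[Δ] pt) (𝓝 1) := hEpt ▸ hcont
    have h12 := ht.eventually (eventually_gt_nhds (by norm_num : (1:ℝ)/2 < 1))
    have h12' : {x : Fin n → ℝ | (1:ℝ)/2 < E x} ∈ 𝓝[Δ] pt := h12
    rw [Metric.mem_nhdsWithin_iff] at h12'
    obtain ⟨δ, hδ, hsub2⟩ := h12'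
    have hkey : ∀ x ∈ Δ, dist x pt < δ → (1:ℝ)/2 < E x := by
      intro x hx hd
      exact hsub2 ⟨Metric.mem_ball.mpr hd, hx⟩
    have hdouble : ∀ x ∈ Δ, dist x pt < δ → pt + (2:ℝ) • (x - pt) ∈ Δ := by
      intro x hx hd
      have hEx := hkey x hx hd
      rw [hE] at hEx
      obtain ⟨s, hs, hs2⟩ := exists_lt_of_lt_csSup ⟨0, h0mem x hx⟩ hEx
      obtain ⟨⟨hs0, hs1⟩, y, hy, hxy⟩ := hs
      have hmem := hconv hptΔ hy (by linarith : (0:ℝ) ≤ 1 - 2*(1-s))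
        (by linarith : (0:ℝ) ≤ 2*(1-s)) (by ring)
      have heq : pt + (2:ℝ) • (x - pt) = (1 - 2*(1-s)) • pt + (2*(1-s)) • y := by
        rw [hxy]; match_scalars <;> ring
      rw [heq]; exact hmem
    have hiter : ∀ N : ℕ, ∀ x ∈ Δ, (2:ℝ)^N * dist x pt < δ →
        pt + ((2:ℝ)^N) • (x - pt) ∈ Δ := by
      intro N
      induction N with
      | zero => intro x hx h; simpa using hx
      | succ N ih =>
        intro x hx h
        have hdnn : 0 ≤ dist x pt := dist_nonneg
        have h2N : (0:ℝ) < 2^N := by positivity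
        have h' : (2:ℝ)^N * dist x pt < δ := by
          have : (2:ℝ)^N * dist x pt ≤ (2:ℝ)^(N+1) * dist x pt := by
            apply mul_le_mul_of_nonneg_right _ hdnn
            apply pow_le_pow_right₀ (by norm_num) (by omega)
          linarith
        have hw := ih x hx h'
        have hwd : dist (pt + ((2:ℝ)^N) • (x - pt)) pt = (2:ℝ)^N * dist x pt := by
          rw [dist_eq_norm, dist_eq_norm]
          have : pt + ((2:ℝ)^N) • (x - pt) - pt = ((2:ℝ)^N) • (x - pt) := by abel
          rw [this, norm_smul, Real.norm_of_nonneg (le_of_lt h2N)]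
        have hmem := hdouble _ hw (by rw [hwd]; exact h')
        have heq : pt + ((2:ℝ)^(N+1)) • (x - pt)
            = pt + (2:ℝ) • ((pt + ((2:ℝ)^N) • (x - pt)) - pt) := by
          match_scalars <;> ring
        rw [heq]; exact hmem
    refine ⟨closure {z : Fin n → ℝ | ∃ x ∈ Δ, ∃ r : ℝ, 0 ≤ r ∧ z = pt + r • (x - pt)},
      isClosed_closure, ?_, ?_, Metric.ball pt δ, Metric.ball_mem_nhds pt hδ, ?_⟩
    · apply Convex.closure
      rintro z₁ ⟨x₁, hx₁, r₁, hr₁, rfl⟩ z₂ ⟨x₂, hx₂, r₂, hr₂, rfl⟩ α β hα hβ hαβ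
      by_cases hs : α*r₁ + β*r₂ = 0
      · have har : α*r₁ = 0 ∧ β*r₂ = 0 := by
          constructor <;> nlinarith [mul_nonneg hα hr₁, mul_nonneg hβ hr₂]
        refine ⟨pt, hptΔ, 0, le_rfl, ?_⟩
        have heq : α • (pt + r₁ • (x₁ - pt)) + β • (pt + r₂ • (x₂ - pt))
            = (α + β) • pt + (α*r₁) • (x₁ - pt) + (β*r₂) • (x₂ - pt) := by
          match_scalars <;> ring
        rw [heq, har.1, har.2, hαβ]
        simp
      · have hspos : 0 < α*r₁ + β*r₂ :=
          lt_of_le_of_ne (by positivity) (Ne.symm hs)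
        have hxΔ : ((α*r₁/(α*r₁+β*r₂)) • x₁ + (β*r₂/(α*r₁+β*r₂)) • x₂) ∈ Δ := by
          apply hconv hx₁ hx₂ (by positivity) (by positivity)
          field_simp
        refine ⟨_, hxΔ, α*r₁+β*r₂, le_of_lt hspos, ?_⟩
        have hsne : α*r₁ + β*r₂ ≠ 0 := hs
        match_scalars <;> field_simp <;> ring_nf <;> nlinarith [hαβ]
    · rintro z hz r hr
      have hmaps : Set.MapsTo (fun w => pt + r • (w - pt))
          {z : Fin n → ℝ | ∃ x ∈ Δ, ∃ r : ℝ, 0 ≤ r ∧ z = pt + r • (x - pt)}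
          {z : Fin n → ℝ | ∃ x ∈ Δ, ∃ r : ℝ, 0 ≤ r ∧ z = pt + r • (x - pt)} := by
        rintro w ⟨x, hx, r', hr', rfl⟩
        refine ⟨x, hx, r*r', mul_nonneg hr hr', ?_⟩
        match_scalars <;> ring
      have hcont2 : Continuous fun w : Fin n → ℝ => pt + r • (w - pt) :=
        continuous_const.add ((continuous_id.sub continuous_const).const_smul r)
      have hres := map_mem_closure hcont2 hz hmaps
      exact hres
    · apply Set.Subset.antisymm
      · rintro x ⟨hxΔ, hxb⟩
        exact ⟨subset_closure ⟨x, hxΔ, 1, zero_le_one, by simp⟩, hxb⟩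
      · rintro z ⟨hzC, hzb⟩
        refine ⟨?_, hzb⟩
        have hKb : {z : Fin n → ℝ | ∃ x ∈ Δ, ∃ r : ℝ, 0 ≤ r ∧ z = pt + r • (x - pt)}
            ∩ Metric.ball pt δ ⊆ Δ := by
          rintro w ⟨⟨x, hx, r, hr, rfl⟩, hwb⟩
          rcases le_or_gt r 1 with hr1 | hr1
          · have heq : pt + r • (x - pt) = (1-r) • pt + r • x := by
              match_scalars <;> ring
            rw [heq]
            exact hconv hptΔ hx (by linarith) hr (by ring)
          · obtain ⟨N, hN⟩ := pow_unbounded_of_one_lt r (by norm_num : (1:ℝ) < 2)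
            have hN' : r ≤ (2:ℝ)^N := le_of_lt hN
            have h2N : (0:ℝ) < 2^N := by positivity
            have hx' : pt + (r/2^N) • (x - pt) ∈ Δ := by
              have heq : pt + (r/2^N) • (x - pt) = (1-r/2^N) • pt + (r/2^N) • x := by
                match_scalars <;> ring
              rw [heq]
              apply hconv hptΔ hx
              · have : r/2^N ≤ 1 := by rw [div_le_one h2N]; exact hN'
                linarith
              · positivity
              · ring
            have hwdist : dist (pt + r • (x - pt)) pt = r * dist x pt := by
              rw [dist_eq_norm, dist_eq_norm]
              have : pt + r • (x - pt) - pt = r • (x - pt) := by abel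
              rw [this, norm_smul, Real.norm_of_nonneg hr]
            have hd' : (2:ℝ)^N * dist (pt + (r/2^N) • (x - pt)) pt < δ := by
              have hxd : dist (pt + (r/2^N) • (x - pt)) pt = (r/2^N) * dist x pt := by
                rw [dist_eq_norm, dist_eq_norm]
                have : pt + (r/2^N) • (x - pt) - pt = (r/2^N) • (x - pt) := by abel
                rw [this, norm_smul, Real.norm_of_nonneg (by positivity)]
              rw [hxd]
              have hball := Metric.mem_ball.mp hwb
              rw [hwdist] at hball
              calc (2:ℝ)^N * (r/2^N * dist x pt) = r * dist x pt := by field_simp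
              _ < δ := hball
            have hmem := hiter N _ hx' hd'
            have heq : pt + r • (x - pt)
                = pt + ((2:ℝ)^N) • ((pt + (r/2^N) • (x - pt)) - pt) := by
              match_scalars <;> field_simp <;> ring
            rw [heq]; exact hmem
        have hz2 : z ∈ closure (Metric.ball pt δ ∩
            {z : Fin n → ℝ | ∃ x ∈ Δ, ∃ r : ℝ, 0 ≤ r ∧ z = pt + r • (x - pt)}) :=
          Metric.isOpen_ball.inter_closure ⟨hzb, hzC⟩
        have hsub' : Metric.ball pt δ ∩
            {z : Fin n → ℝ | ∃ x ∈ Δ, ∃ r : ℝ, 0 ≤ r ∧ z = pt + r • (x - pt)} ⊆ Δ :=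
          fun w hw => hKb ⟨hw.2, hw.1⟩
        have := closure_mono hsub' hz2
        rwa [hΔclosed.closure_eq] at this
  · -- conical implies continuity
    rintro ⟨C, hCcl, hCconv, hcone, U, hU, hΔU⟩
    rw [Metric.continuousWithinAt_iff]
    intro ε hε
    obtain ⟨δ₀, hδ₀, hball⟩ := Metric.mem_nhds_iff.mp hU
    refine ⟨min (δ₀/2) (ε*δ₀/4), by positivity, ?_⟩
    intro x hx hdx
    rw [hEpt]
    by_cases hxp : x = pt
    · subst hxp
      rw [hEpt]
      simpa using hε
    · have hd0 : 0 < dist x pt := dist_pos.mpr hxp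
      have hdδ : dist x pt < δ₀/2 := lt_of_lt_of_le hdx (min_le_left _ _)
      have hdε : dist x pt < ε*δ₀/4 := lt_of_lt_of_le hdx (min_le_right _ _)
      set ρ := (δ₀/2)/(dist x pt) with hρ
      have hρ1 : 1 < ρ := (one_lt_div hd0).mpr hdδ
      have hρ0 : 0 < ρ := lt_trans one_pos hρ1
      have hxU : x ∈ U := hball (Metric.mem_ball.mpr (by linarith))
      have hxC : x ∈ C := by
        have : x ∈ C ∩ U := hΔU ▸ (⟨hx, hxU⟩ : x ∈ Δ ∩ U)
        exact this.1
      have hyC : pt + ρ • (x - pt) ∈ C := hcone x hxC ρ (le_of_lt hρ0)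
      have hydist : dist (pt + ρ • (x - pt)) pt = δ₀/2 := by
        rw [dist_eq_norm]
        have h1 : pt + ρ • (x - pt) - pt = ρ • (x - pt) := by abel
        rw [h1, norm_smul, Real.norm_of_nonneg (le_of_lt hρ0), ← dist_eq_norm, hρ]
        field_simp
      have hyU : pt + ρ • (x - pt) ∈ U := hball (Metric.mem_ball.mpr (by rw [hydist]; linarith))
      have hyΔ : pt + ρ • (x - pt) ∈ Δ := by
        have : pt + ρ • (x - pt) ∈ Δ ∩ U := hΔU.symm ▸ (⟨hyC, hyU⟩ : pt + ρ • (x - pt) ∈ C ∩ U)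
        exact this.1
      have hρne : ρ ≠ 0 := ne_of_gt hρ0
      have hρinv1 : ρ⁻¹ < 1 := by rw [inv_lt_one_iff₀]; right; exact hρ1
      have hρinv0 : 0 < ρ⁻¹ := by positivity
      have hsmem : (1 - ρ⁻¹) ∈ {t : ℝ | t ∈ Set.Icc (0:ℝ) 1 ∧
          ∃ y ∈ Δ, x = t • pt + (1 - t) • y} := by
        refine ⟨⟨by linarith, by linarith⟩, pt + ρ • (x - pt), hyΔ, ?_⟩
        match_scalars <;> field_simp <;> ring
      have h1 : 1 - ρ⁻¹ ≤ E x := hE_ge x _ hsmem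
      have hEx1 : E x ≤ 1 := hE_le x hx
      have hdist : dist (E x) 1 = 1 - E x := by
        rw [Real.dist_eq, abs_of_nonpos (by linarith)]
        ring
      rw [hdist]
      have hρinv : ρ⁻¹ = 2 * dist x pt / δ₀ := by
        rw [hρ]
        field_simp
      rw [hρinv] at h1
      have : 2 * dist x pt / δ₀ < ε := by
        rw [div_lt_iff₀ hδ₀]
        nlinarith
      linarith
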